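/- For data length n ≥ 3 and the 1-step binary segmentation model selecting changepoint b₁ ∈ {1,...,n-1} with direction d₁ ∈ {-1,1}, the set of vectors y ∈ ℝⁿ for which the maximizing absolute CUSUM statistic occurs at b₁ with sign d₁ is exactly the set {y : Γy ≥ 0} for an explicit matrix Γ with 2(n-2) rows, where each row is d₁·g_{(1,b₁,n)} - g_{(1,b,n)} or d₁·g_{(1,b₁,n)} + g_{(1,b,n)} for b ≠ b₁. -/
import Mathlib


/-- Sum of the entries of `y` over the (1-indexed) data positions `a, ..., b`. -/
noncomputable def segSum (n : ℕ) (y : Fin n → ℝ) (a b : ℕ) : ℝ :=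
  ∑ i ∈ Finset.Icc a b, if h : i - 1 < n then y ⟨i - 1, h⟩ else 0

/-- Sample mean of `y` over the (1-indexed) data positions `a, ..., b`. -/
noncomputable def segMean (n : ℕ) (y : Fin n → ℝ) (a b : ℕ) : ℝ :=
  segSum n y a b / ((b : ℝ) - a + 1)

/-- CUSUM statistic `g_{(s,b,e)}ᵀ y`: the weighted difference between the sample mean of
`y_{(b+1):e}` and the sample mean of `y_{s:b}`. -/
noncomputable def cusum (n : ℕ) (s b e : ℕ) (y : Fin n → ℝ) : ℝ :=
  Real.sqrt (1 / (1 / ((e : ℝ) - b) + 1 / ((b : ℝ) + 1 - s))) *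
    (segMean n y (b + 1) e - segMean n y s b)

lemma segSum_eq_sum (n a b : ℕ) (y : Fin n → ℝ) :
    segSum n y a b = ∑ j : Fin n, segSum n (Pi.single j 1) a b * y j := by
  unfold segSum
  simp only [Finset.sum_mul]
  rw [Finset.sum_comm]
  refine Finset.sum_congr rfl fun i _ => ?_
  by_cases h : i - 1 < n
  · simp only [dif_pos h]
    rw [Fintype.sum_eq_single ⟨i - 1, h⟩ (fun j hj => ?_)]
    · simp
    · rw [Pi.single_apply, if_neg, zero_mul]
      exact fun hh => hj (hh ▸ rfl)
  · simp [dif_neg h]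

lemma cusum_eq_sum (n s b e : ℕ) (y : Fin n → ℝ) :
    cusum n s b e y = ∑ j : Fin n, cusum n s b e (Pi.single j 1) * y j := by
  unfold cusum segMean
  rw [segSum_eq_sum n (b+1) e y, segSum_eq_sum n s b y,
    Finset.sum_div, Finset.sum_div, ← Finset.sum_sub_distrib, Finset.mul_sum]
  exact Finset.sum_congr rfl fun j _ => by ring

/-- For `n ≥ 3`, a changepoint `b₁ ∈ {1,...,n-1}` and direction `d₁ ∈ {-1,1}`,
the 1-step binary segmentation selection event (the maximizing absolute CUSUM statistic
occurs at `b₁` with sign `d₁`, i.e. `d₁ g_{(1,b₁,n)}ᵀ y ≥ ± g_{(1,b,n)}ᵀ y` for all `b ≠ b₁`)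
equals `{y : Γy ≥ 0}` for an explicit matrix `Γ` with `2(n-2)` rows, each row being
`d₁·g_{(1,b₁,n)} − g_{(1,b,n)}` or `d₁·g_{(1,b₁,n)} + g_{(1,b,n)}` for some `b ≠ b₁`. -/
theorem one_step_bs_polyhedral (n : ℕ) (hn : 3 ≤ n)
    (b₁ : ℕ) (hb₁ : b₁ ∈ Finset.Icc 1 (n - 1)) (d₁ : ℝ) (hd₁ : d₁ = 1 ∨ d₁ = -1) :
    ∃ Γ : Matrix (Fin (2 * (n - 2))) (Fin n) ℝ,
      (∀ y : Fin n → ℝ,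
        (∀ b ∈ Finset.Icc 1 (n - 1), b ≠ b₁ →
            cusum n 1 b n y ≤ d₁ * cusum n 1 b₁ n y ∧
            - cusum n 1 b n y ≤ d₁ * cusum n 1 b₁ n y)
          ↔ (∀ i, 0 ≤ Γ.mulVec y i)) ∧
      (∀ i : Fin (2 * (n - 2)), ∃ b ∈ Finset.Icc 1 (n - 1), b ≠ b₁ ∧
        ((∀ y, Γ.mulVec y i = d₁ * cusum n 1 b₁ n y - cusum n 1 b n y) ∨
         (∀ y, Γ.mulVec y i = d₁ * cusum n 1 b₁ n y + cusum n 1 b n y))) := by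
  rw [Finset.mem_Icc] at hb₁
  have hm : 0 < n - 2 := by omega
  set f : ℕ → ℕ := fun k => if k + 1 < b₁ then k + 1 else k + 2 with hf
  have hf_mem : ∀ k, k < n - 2 → (1 ≤ f k ∧ f k ≤ n - 1) ∧ f k ≠ b₁ := by
    intro k hk
    simp only [hf]
    split <;> omega
  have hf_surj : ∀ b, 1 ≤ b → b ≤ n - 1 → b ≠ b₁ → ∃ k, k < n - 2 ∧ f k = b := by
    intro b h1 h2 h3
    rcases lt_or_gt_of_ne h3 with h | h
    · exact ⟨b - 1, by omega, by simp only [hf]; split <;> omega⟩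
    · exact ⟨b - 2, by omega, by simp only [hf]; split <;> omega⟩
  refine ⟨fun i j => d₁ * cusum n 1 b₁ n (Pi.single j 1) +
      (if (i : ℕ) < n - 2 then -1 else 1) * cusum n 1 (f ((i : ℕ) % (n - 2))) n (Pi.single j 1),
    ?_, ?_⟩
  · intro y
    have key : ∀ (c : ℝ) (b : ℕ),
        ∑ j : Fin n, (d₁ * cusum n 1 b₁ n (Pi.single j 1) +
          c * cusum n 1 b n (Pi.single j 1)) * y j
        = d₁ * cusum n 1 b₁ n y + c * cusum n 1 b n y := by
      intro c b
      rw [cusum_eq_sum n 1 b₁ n y, cusum_eq_sum n 1 b n y, Finset.mul_sum, Finset.mul_sum,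
        ← Finset.sum_add_distrib]
      exact Finset.sum_congr rfl fun j _ => by ring
    constructor
    · intro H i
      have hk : (i : ℕ) % (n - 2) < n - 2 := Nat.mod_lt _ hm
      obtain ⟨hmem, hne⟩ := hf_mem _ hk
      have hb := H (f ((i : ℕ) % (n - 2))) (Finset.mem_Icc.mpr hmem) hne
      simp only [Matrix.mulVec, dotProduct]
      by_cases hi : (i : ℕ) < n - 2
      · simp only [if_pos hi, key]
        linarith [hb.1]
      · simp only [if_neg hi, key]
        linarith [hb.2]
    · intro H b hb hbne
      rw [Finset.mem_Icc] at hb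
      obtain ⟨k, hk, hfk⟩ := hf_surj b hb.1 hb.2 hbne
      have h1 := H ⟨k, by omega⟩
      have h2 := H ⟨k + (n - 2), by omega⟩
      simp only [Matrix.mulVec, dotProduct] at h1 h2
      have e1 : (k : ℕ) % (n - 2) = k := Nat.mod_eq_of_lt hk
      have e2 : (k + (n - 2)) % (n - 2) = k := by
        rw [Nat.add_mod_right]; exact Nat.mod_eq_of_lt hk
      simp only [if_pos hk, e1, hfk, key] at h1
      simp only [if_neg (by omega : ¬ k + (n - 2) < n - 2), e2, hfk, key] at h2
      constructor <;> linarith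
  · intro i
    have hk : (i : ℕ) % (n - 2) < n - 2 := Nat.mod_lt _ hm
    obtain ⟨hmem, hne⟩ := hf_mem _ hk
    refine ⟨f ((i : ℕ) % (n - 2)), Finset.mem_Icc.mpr hmem, hne, ?_⟩
    have key : ∀ (c : ℝ) (b : ℕ) (y : Fin n → ℝ),
        ∑ j : Fin n, (d₁ * cusum n 1 b₁ n (Pi.single j 1) +
          c * cusum n 1 b n (Pi.single j 1)) * y j
        = d₁ * cusum n 1 b₁ n y + c * cusum n 1 b n y := by
      intro c b y
      rw [cusum_eq_sum n 1 b₁ n y, cusum_eq_sum n 1 b n y, Finset.mul_sum, Finset.mul_sum,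
        ← Finset.sum_add_distrib]
      exact Finset.sum_congr rfl fun j _ => by ring
    by_cases hi : (i : ℕ) < n - 2
    · left
      intro y
      simp only [Matrix.mulVec, dotProduct, if_pos hi, key]
      ring
    · right
      intro y
      simp only [Matrix.mulVec, dotProduct, if_neg hi, key]
      ring
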